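/- Combining the previous results: let ε satisfy ‖ε(x) − ε(x_adv)‖ ≥ Q with Q > 0, define q_ᾱ(v) = √ᾱ·v + √(1−ᾱ)·ε(v) on ℝ^n with ᾱ ∈ [0,1], and suppose q_ᾱ is Lipschitz with constant L with 0 < L. Let x_adv = x + δ. Then for any vector y with q_ᾱ(y) = q_ᾱ(x_adv), we have ‖x − y‖ ≥ (√(1−ᾱ)·Q − √ᾱ·‖δ‖) / L. -/
import Mathlib


theorem stmt4 {n : ℕ} (ε : EuclideanSpace ℝ (Fin n) → EuclideanSpace ℝ (Fin n))
    (x δ y : EuclideanSpace ℝ (Fin n)) (Q a L : ℝ)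
    (hQ : 0 < Q) (ha0 : 0 ≤ a) (ha1 : a ≤ 1) (hL : 0 < L)
    (hsep : ‖ε x - ε (x + δ)‖ ≥ Q)
    (hLip : ∀ u v : EuclideanSpace ℝ (Fin n),
      ‖(Real.sqrt a • u + Real.sqrt (1 - a) • ε u) -
        (Real.sqrt a • v + Real.sqrt (1 - a) • ε v)‖ ≤ L * ‖u - v‖)
    (hy : Real.sqrt a • y + Real.sqrt (1 - a) • ε y =
      Real.sqrt a • (x + δ) + Real.sqrt (1 - a) • ε (x + δ)) :
    ‖x - y‖ ≥ (Real.sqrt (1 - a) * Q - Real.sqrt a * ‖δ‖) / L := by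
  rw [ge_iff_le, div_le_iff₀ hL]
  have h1 : ‖(Real.sqrt a • x + Real.sqrt (1 - a) • ε x) -
      (Real.sqrt a • y + Real.sqrt (1 - a) • ε y)‖ ≤ L * ‖x - y‖ := hLip x y
  rw [hy] at h1
  have h2 : (Real.sqrt a • x + Real.sqrt (1 - a) • ε x) -
      (Real.sqrt a • (x + δ) + Real.sqrt (1 - a) • ε (x + δ)) =
      Real.sqrt (1 - a) • (ε x - ε (x + δ)) - Real.sqrt a • δ := by
    simp [smul_add, smul_sub]; abel
  rw [h2, mul_comm] at h1
  have h3 : Real.sqrt (1 - a) * Q - Real.sqrt a * ‖δ‖ ≤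
      ‖Real.sqrt (1 - a) • (ε x - ε (x + δ)) - Real.sqrt a • δ‖ := by
    have hrev := norm_sub_norm_le (Real.sqrt (1 - a) • (ε x - ε (x + δ))) (Real.sqrt a • δ)
    rw [norm_smul, norm_smul] at hrev
    have hs : 0 ≤ Real.sqrt (1 - a) := Real.sqrt_nonneg _
    have : Real.sqrt (1 - a) * Q ≤ Real.sqrt (1 - a) * ‖ε x - ε (x + δ)‖ :=
      mul_le_mul_of_nonneg_left hsep hs
    have habs : ‖Real.sqrt (1 - a)‖ = Real.sqrt (1 - a) := Real.norm_of_nonneg hs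
    have habs2 : ‖Real.sqrt a‖ = Real.sqrt a := Real.norm_of_nonneg (Real.sqrt_nonneg _)
    rw [habs, habs2] at hrev
    linarith
  linarith
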